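/- For a complete first-order theory T the following are equivalent: (i) T does not have SOP₁; (ii) T does not have SOP₁'; (iii) rk¹_φ({x̄=x̄},{ȳ=ȳ}) is finite for every formula φ(x̄,ȳ). -/

import Mathlib

open FirstOrder FirstOrder.Language

namespace SopPaper

variable {L : FirstOrder.Language.{0, 0}}

/-- A first-order formula with parameters from `M`, in free variables indexed by `Fin m`. -/
structure ParamFormula (L : FirstOrder.Language.{0, 0}) (M : Type*) [L.Structure M] (m : ℕ) where
  k : ℕ
  toFormula : L.Formula (Fin m ⊕ Fin k)
  par : Fin k → M

variable {M : Type*} [L.Structure M]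

/-- Realization of a formula with parameters at a tuple `e`. -/
def ParamFormula.Realize {m : ℕ} (ψ : ParamFormula L M m) (e : Fin m → M) : Prop :=
  ψ.toFormula.Realize (Sum.elim e ψ.par)

/-- A tuple `e` realizes the partial type `p`. -/
def Realizes {m : ℕ} (p : Set (ParamFormula L M m)) (e : Fin m → M) : Prop :=
  ∀ ψ ∈ p, ψ.Realize e

/-- A partial type (over the monster model) is consistent iff it is realized. -/
def Consistent {m : ℕ} (p : Set (ParamFormula L M m)) : Prop :=
  ∃ e, Realizes p e

/-- The restriction `ρ ↾ k` of an infinite branch `ρ ∈ 2^ω` to a finite sequence. -/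
def restrict (ρ : ℕ → Bool) (k : ℕ) : List Bool :=
  List.ofFn fun i : Fin k => ρ i

/-- `φ(x̄, ȳ)` exemplifies SOP₁ in the structure `M` (thought of as the monster model):
there is a tree of parameters `⟨ā_η : η ∈ 2^{<ω}⟩` such that every branch is consistent,
and `{φ(x̄, ā_η), φ(x̄, ā_{ν⌢⟨1⟩})}` is inconsistent whenever `ν⌢⟨0⟩ ⊴ η`. -/
def ExemplifiesSOP1 {mx my : ℕ} (φ : L.Formula (Fin mx ⊕ Fin my)) (M : Type*)
    [L.Structure M] : Prop :=
  ∃ a : List Bool → Fin my → M,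
    (∀ ρ : ℕ → Bool, ∃ e : Fin mx → M, ∀ k : ℕ,
        φ.Realize (Sum.elim e (a (restrict ρ k)))) ∧
    ∀ ν η : List Bool, (ν ++ [false]) <+: η →
      ¬ ∃ e : Fin mx → M,
          φ.Realize (Sum.elim e (a η)) ∧ φ.Realize (Sum.elim e (a (ν ++ [true])))

/-- `φ(x̄, ȳ)` exemplifies SOP₁' in the structure `M`:  there is a tree of parameters
`⟨ā_η : η ∈ 2^{<ω}⟩` such that for every branch `ρ ∈ 2^ω` the signed set
`{φ(x̄, ā_{ρ↾n})^{ρ(n)} : n < ω}` is consistent, and `{φ(x̄, ā_η), φ(x̄, ā_ν)}` is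
inconsistent whenever `ν⌢⟨0⟩ ⊴ η`. -/
def ExemplifiesSOP1' {mx my : ℕ} (φ : L.Formula (Fin mx ⊕ Fin my)) (M : Type*)
    [L.Structure M] : Prop :=
  ∃ a : List Bool → Fin my → M,
    (∀ ρ : ℕ → Bool, ∃ e : Fin mx → M, ∀ k : ℕ,
        (φ.Realize (Sum.elim e (a (restrict ρ k))) ↔ ρ k = true)) ∧
    ∀ ν η : List Bool, (ν ++ [false]) <+: η →
      ¬ ∃ e : Fin mx → M,
          φ.Realize (Sum.elim e (a η)) ∧ φ.Realize (Sum.elim e (a ν))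

/-- The formula `¬ (∃ x̄)(φ(x̄, ȳ) ∧ φ(x̄, z̄))` in the variables `ȳ ⊕ z̄`. -/
def incompatFormula {mx my : ℕ} (φ : L.Formula (Fin mx ⊕ Fin my)) :
    L.Formula (Fin my ⊕ Fin my) :=
  (((BoundedFormula.relabel
        (Sum.elim (fun i => Sum.inr i) fun j => Sum.inl (Sum.inl j)) φ) ⊓
      (BoundedFormula.relabel
        (Sum.elim (fun i => Sum.inr i) fun j => Sum.inl (Sum.inr j)) φ)).exs).not

/-- `rk¹_φ(p, q) ≥ n`. -/
def RankGE {mx my : ℕ} (φ : L.Formula (Fin mx ⊕ Fin my)) :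
    ℕ → Set (ParamFormula L M mx) → Set (ParamFormula L M my) → Prop
  | 0, p, q => Consistent p ∧ Consistent q
  | n + 1, p, q =>
      ∃ c : Fin my → M, Realizes q c ∧
        RankGE φ n (insert ⟨my, φ, c⟩ p) q ∧
        RankGE φ n p (insert ⟨my, incompatFormula φ, c⟩ q)

/-- `a` is a `φ`-SOP₁' tree for `p(x̄)` and `q(ȳ)` of depth `n`. -/
def IsSOP1'Tree {mx my : ℕ} (φ : L.Formula (Fin mx ⊕ Fin my))
    (p : Set (ParamFormula L M mx)) (q : Set (ParamFormula L M my))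
    (n : ℕ) (a : List Bool → Fin my → M) : Prop :=
  (∀ η : List Bool, η.length = n → ∃ e : Fin mx → M, Realizes p e ∧
      ∀ ℓ : ℕ, ℓ < n →
        (φ.Realize (Sum.elim e (a (η.take ℓ))) ↔ η.getD ℓ false = true)) ∧
  (∀ η : List Bool, η.length ≤ n → Realizes q (a η)) ∧
  (∀ ν η : List Bool, η.length ≤ n → (ν ++ [false]) <+: η →
      ¬ ∃ e : Fin mx → M,
          φ.Realize (Sum.elim e (a η)) ∧ φ.Realize (Sum.elim e (a ν)))

/-- `φ(x̄, ȳ)` exemplifies SOP₂ in the structure `M`. -/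
def ExemplifiesSOP2 {mx my : ℕ} (φ : L.Formula (Fin mx ⊕ Fin my)) (M : Type*)
    [L.Structure M] : Prop :=
  ∃ a : List Bool → Fin my → M,
    (∀ ρ : ℕ → Bool, ∃ e : Fin mx → M, ∀ k : ℕ,
        φ.Realize (Sum.elim e (a (restrict ρ k)))) ∧
    ∀ η ν : List Bool, ¬ η <+: ν → ¬ ν <+: η →
      ¬ ∃ e : Fin mx → M,
          φ.Realize (Sum.elim e (a η)) ∧ φ.Realize (Sum.elim e (a ν))


/- ============ auxiliary list lemmas ============ -/

lemma restrict_length (ρ : ℕ → Bool) (k : ℕ) : (restrict ρ k).length = k := by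
  simp [restrict]

lemma restrict_getElem (ρ : ℕ → Bool) {k i : ℕ} (h : i < (restrict ρ k).length) :
    (restrict ρ k)[i] = ρ i := by
  simp [restrict]

lemma restrict_succ (ρ : ℕ → Bool) (k : ℕ) :
    restrict ρ (k+1) = restrict ρ k ++ [ρ k] := by
  rw [restrict, List.ofFn_succ']
  simp [restrict, List.concat_eq_append]

lemma restrict_prefix (ρ : ℕ → Bool) {k m : ℕ} (h : k ≤ m) :
    restrict ρ k <+: restrict ρ m := by
  induction m with
  | zero => simp_all
  | succ m ih =>
    rcases Nat.lt_or_ge k (m+1) with h' | h'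
    · exact (ih (Nat.lt_succ_iff.mp h')).trans (by rw [restrict_succ]; exact List.prefix_append _ _)
    · have : k = m + 1 := le_antisymm h h'
      subst this; exact List.prefix_refl _

lemma restrict_getD (η : List Bool) {ℓ : ℕ} (h : ℓ ≤ η.length) :
    restrict (fun k => η.getD k false) ℓ = η.take ℓ := by
  apply List.ext_getElem
  · simp [restrict_length, Nat.min_eq_left h]
  · intro i h1 h2
    have hi : i < η.length := by
      rw [restrict_length] at h1; omega
    rw [restrict_getElem, List.getElem_take, List.getD_eq_getElem _ _ hi]

lemma restrict_take (ρ : ℕ → Bool) {k m : ℕ} (h : k ≤ m) :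
    (restrict ρ m).take k = restrict ρ k := by
  have h2 := restrict_prefix ρ h
  rw [List.prefix_iff_eq_take, restrict_length] at h2
  exact h2.symm

/- ============ incompat realization ============ -/

lemma realize_incompatFormula {mx my : ℕ} {φ : L.Formula (Fin mx ⊕ Fin my)}
    {d c : Fin my → M} :
    (incompatFormula φ).Realize (Sum.elim d c) ↔
      ¬ ∃ e : Fin mx → M, φ.Realize (Sum.elim e d) ∧ φ.Realize (Sum.elim e c) := by
  unfold incompatFormula
  rw [Formula.realize_not]
  apply not_congr
  rw [BoundedFormula.realize_exs]
  simp only [BoundedFormula.realize_inf, BoundedFormula.realize_relabel, Formula.Realize]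
  constructor
  · rintro ⟨xs, h1, h2⟩
    refine ⟨xs ∘ Fin.castAdd 0, ?_, ?_⟩
    · have hv : (Sum.elim (Sum.elim d c) (xs ∘ Fin.castAdd 0) ∘
          Sum.elim (fun i => Sum.inr i) fun j => Sum.inl (Sum.inl j))
          = Sum.elim (xs ∘ Fin.castAdd 0) d := by
        funext a; rcases a with i | j <;> rfl
      rw [hv, Subsingleton.elim (xs ∘ Fin.natAdd mx) default] at h1
      exact h1
    · have hv : (Sum.elim (Sum.elim d c) (xs ∘ Fin.castAdd 0) ∘
          Sum.elim (fun i => Sum.inr i) fun j => Sum.inl (Sum.inr j))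
          = Sum.elim (xs ∘ Fin.castAdd 0) c := by
        funext a; rcases a with i | j <;> rfl
      rw [hv, Subsingleton.elim (xs ∘ Fin.natAdd mx) default] at h2
      exact h2
  · rintro ⟨e, h1, h2⟩
    refine ⟨fun i => e ⟨i.1, by omega⟩, ?_, ?_⟩
    · have hv : (Sum.elim (Sum.elim d c) ((fun i : Fin (mx+0) => e ⟨i.1, by omega⟩) ∘ Fin.castAdd 0) ∘
          Sum.elim (fun i => Sum.inr i) fun j => Sum.inl (Sum.inl j))
          = Sum.elim e d := by
        funext a; rcases a with i | j
        · exact congrArg e (Fin.ext rfl)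
        · rfl
      rw [hv, Subsingleton.elim ((fun i : Fin (mx+0) => e ⟨i.1, by omega⟩) ∘ Fin.natAdd mx) default]
      exact h1
    · have hv : (Sum.elim (Sum.elim d c) ((fun i : Fin (mx+0) => e ⟨i.1, by omega⟩) ∘ Fin.castAdd 0) ∘
          Sum.elim (fun i => Sum.inr i) fun j => Sum.inl (Sum.inr j))
          = Sum.elim e c := by
        funext a; rcases a with i | j
        · exact congrArg e (Fin.ext rfl)
        · rfl
      rw [hv, Subsingleton.elim ((fun i : Fin (mx+0) => e ⟨i.1, by omega⟩) ∘ Fin.natAdd mx) default]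
      exact h2


/- ============ trees and rank ============ -/

lemma paramRealize_mk {mx my : ℕ} (ψ : L.Formula (Fin mx ⊕ Fin my)) (c : Fin my → M)
    (e : Fin mx → M) :
    ParamFormula.Realize ⟨my, ψ, c⟩ e ↔ ψ.Realize (Sum.elim e c) := Iff.rfl

def TreeOn {mx my : ℕ} (φ : L.Formula (Fin mx ⊕ Fin my))
    (p : Set (ParamFormula L M mx)) (q : Set (ParamFormula L M my))
    (n : ℕ) (c : List Bool → Fin my → M) : Prop :=
  (∀ η : List Bool, η.length = n → ∃ e : Fin mx → M, Realizes p e ∧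
      ∀ ℓ : ℕ, ℓ < n → η.getD ℓ false = true → φ.Realize (Sum.elim e (c (η.take ℓ)))) ∧
  (∀ η : List Bool, η.length ≤ n → Realizes q (c η)) ∧
  (∀ ν η : List Bool, η.length ≤ n → (ν ++ [false]) <+: η →
      ¬ ∃ e : Fin mx → M, φ.Realize (Sum.elim e (c η)) ∧ φ.Realize (Sum.elim e (c ν)))

lemma not_prefix_nil {ν : List Bool} : ¬ (ν ++ [false]) <+: ([] : List Bool) := by
  intro h
  have := h.length_le
  simp at this

lemma rankGE_of_treeOn {mx my : ℕ} (φ : L.Formula (Fin mx ⊕ Fin my)) :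
    ∀ (n : ℕ) (p : Set (ParamFormula L M mx)) (q : Set (ParamFormula L M my))
      (c : List Bool → Fin my → M), TreeOn φ p q n c → RankGE φ n p q := by
  intro n
  induction n with
  | zero =>
    rintro p q c ⟨h1, h2, _⟩
    obtain ⟨e, he, -⟩ := h1 [] rfl
    exact ⟨⟨e, he⟩, ⟨c [], h2 [] (by simp)⟩⟩
  | succ n ih =>
    rintro p q c ⟨h1, h2, h3⟩
    refine ⟨c [], h2 [] (by simp), ?_, ?_⟩
    · -- left subtree
      apply ih _ _ (fun t => c (true :: t))
      refine ⟨?_, ?_, ?_⟩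
      · intro η hη
        obtain ⟨e, he, hφ⟩ := h1 (true :: η) (by simp [hη])
        refine ⟨e, ?_, ?_⟩
        · intro ψ hψ
          rcases Set.mem_insert_iff.mp hψ with h | h
          · subst h
            rw [paramRealize_mk]
            simpa using hφ 0 (by omega) rfl
          · exact he ψ h
        · intro ℓ hℓ hget
          have := hφ (ℓ+1) (by omega) (by simpa using hget)
          simpa using this
      · intro η hη
        exact h2 (true :: η) (by simp; omega)
      · intro ν η hη hpre
        exact h3 (true :: ν) (true :: η) (by simp; omega) (by simpa using hpre)
    · -- right subtree
      apply ih _ _ (fun t => c (false :: t))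
      refine ⟨?_, ?_, ?_⟩
      · intro η hη
        obtain ⟨e, he, hφ⟩ := h1 (false :: η) (by simp [hη])
        refine ⟨e, he, ?_⟩
        intro ℓ hℓ hget
        have := hφ (ℓ+1) (by omega) (by simpa using hget)
        simpa using this
      · intro η hη
        intro ψ hψ
        rcases Set.mem_insert_iff.mp hψ with h | h
        · subst h
          rw [paramRealize_mk, realize_incompatFormula]
          exact h3 [] (false :: η) (by simp; omega) (by simp)
        · exact h2 (false :: η) (by simp; omega) ψ h
      · intro ν η hη hpre
        exact h3 (false :: ν) (false :: η) (by simp; omega) (by simpa using hpre)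

lemma treeOn_of_rankGE {mx my : ℕ} (φ : L.Formula (Fin mx ⊕ Fin my)) :
    ∀ (n : ℕ) (p : Set (ParamFormula L M mx)) (q : Set (ParamFormula L M my)),
      RankGE φ n p q → ∃ c, TreeOn φ p q n c := by
  intro n
  induction n with
  | zero =>
    rintro p q ⟨⟨e, he⟩, ⟨d, hd⟩⟩
    refine ⟨fun _ => d, ?_, ?_, ?_⟩
    · intro η hη
      exact ⟨e, he, fun ℓ hℓ => by omega⟩
    · intro η hη
      exact hd
    · intro ν η hη hpre
      exfalso
      have hη' : η = [] := List.eq_nil_of_length_eq_zero (Nat.le_zero.mp hη)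
      subst hη'
      exact not_prefix_nil hpre
  | succ n ih =>
    rintro p q ⟨c₀, hc₀, hL, hR⟩
    obtain ⟨a1, ha1⟩ := ih _ _ hL
    obtain ⟨a0, ha0⟩ := ih _ _ hR
    refine ⟨fun η => match η with
      | [] => c₀
      | true :: t => a1 t
      | false :: t => a0 t, ?_, ?_, ?_⟩
    · rintro (_ | ⟨b, t⟩) hη
      · simp at hη
      · simp only [List.length_cons, Nat.succ_inj] at hη
        cases b
        · obtain ⟨e, he, hφ⟩ := ha0.1 t hη
          refine ⟨e, he, ?_⟩
          rintro (_ | ℓ) hℓ hget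
          · simp at hget
          · have := hφ ℓ (by omega) (by simpa using hget)
            simpa using this
        · obtain ⟨e, he, hφ⟩ := ha1.1 t hη
          refine ⟨e, fun ψ hψ => he ψ (Set.mem_insert_of_mem _ hψ), ?_⟩
          rintro (_ | ℓ) hℓ hget
          · have := he _ (Set.mem_insert _ _)
            rw [paramRealize_mk] at this
            simpa using this
          · have := hφ ℓ (by omega) (by simpa using hget)
            simpa using this
    · rintro (_ | ⟨b, t⟩) hη
      · exact hc₀
      · simp only [List.length_cons] at hη
        cases b
        · intro ψ hψ
          exact ha0.2.1 t (by omega) ψ (Set.mem_insert_of_mem _ hψ)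
        · exact ha1.2.1 t (by omega)
    · rintro ν (_ | ⟨b, t⟩) hη hpre
      · exact fun _ => not_prefix_nil hpre
      · simp only [List.length_cons] at hη
        rcases ν with _ | ⟨b', ν'⟩
        · -- ν = [], so b = false
          simp only [List.nil_append, List.cons_prefix_cons] at hpre
          obtain ⟨hb, -⟩ := hpre
          subst hb
          have := ha0.2.1 t (by omega) _ (Set.mem_insert _ _)
          rw [paramRealize_mk, realize_incompatFormula] at this
          exact this
        · simp only [List.cons_append, List.cons_prefix_cons] at hpre
          obtain ⟨hb, hpre'⟩ := hpre
          subst hb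
          cases b'
          · exact ha0.2.2 ν' t (by omega) hpre'
          · exact ha1.2.2 ν' t (by omega) hpre'


/- ============ SOP1 <-> SOP1' ============ -/

def blk (b : Bool) : List Bool := if b then [true] else [true, false]

def sig (l : List Bool) : List Bool := l.flatMap blk

lemma sig_append (l t : List Bool) : sig (l ++ t) = sig l ++ sig t := by
  simp [sig]

lemma sig_mono {l t : List Bool} (h : l <+: t) : sig l <+: sig t := by
  obtain ⟨r, rfl⟩ := h
  rw [sig_append]
  exact List.prefix_append _ _

lemma length_le_sig (l : List Bool) : l.length ≤ (sig l).length := by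
  induction l with
  | nil => simp [sig]
  | cons b t ih =>
    have : sig (b :: t) = blk b ++ sig t := by simp [sig]
    rw [this, List.length_append]
    have : 1 ≤ (blk b).length := by cases b <;> simp [blk]
    simp only [List.length_cons]
    omega

lemma getD_prefix {l t : List Bool} (h : l <+: t) {i : ℕ} (hi : i < l.length) (d : Bool) :
    t.getD i d = l.getD i d := by
  rw [List.getD_eq_getElem _ _ hi, List.getD_eq_getElem _ _ (hi.trans_le h.length_le)]
  exact (h.getElem hi).symm

/-- The branch `ρ*` traced by `sig` applied to restrictions of `ρ`. -/
def sigBranch (ρ : ℕ → Bool) : ℕ → Bool :=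
  fun n => (sig (restrict ρ (n+1))).getD n true

lemma sigBranch_eq (ρ : ℕ → Bool) {k n : ℕ} (hn : n < (sig (restrict ρ k)).length) :
    sigBranch ρ n = (sig (restrict ρ k)).getD n true := by
  unfold sigBranch
  rcases le_or_gt k (n+1) with h | h
  · exact getD_prefix (sig_mono (restrict_prefix ρ h)) hn true
  · have h2 : n < (sig (restrict ρ (n+1))).length := by
      have := length_le_sig (restrict ρ (n+1))
      rw [restrict_length] at this
      omega
    exact (getD_prefix (sig_mono (restrict_prefix ρ (le_of_lt h))) h2 true).symm

lemma restrict_sigBranch (ρ : ℕ → Bool) (k : ℕ) :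
    restrict (sigBranch ρ) (sig (restrict ρ k)).length = sig (restrict ρ k) := by
  apply List.ext_getElem
  · simp [restrict_length]
  · intro i h1 h2
    rw [restrict_getElem]
    rw [restrict_length] at h1
    rw [sigBranch_eq ρ h1, List.getD_eq_getElem _ _ h1]

lemma sigBranch_at (ρ : ℕ → Bool) (k : ℕ) :
    sigBranch ρ (sig (restrict ρ k)).length = true := by
  have hsucc : sig (restrict ρ (k+1)) = sig (restrict ρ k) ++ blk (ρ k) := by
    rw [restrict_succ, sig_append]
    simp [sig]
  have hb1 : 1 ≤ (blk (ρ k)).length := by cases (ρ k) <;> simp [blk]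
  have hlen : (sig (restrict ρ k)).length < (sig (restrict ρ (k+1))).length := by
    rw [hsucc, List.length_append]; omega
  rw [sigBranch_eq ρ hlen, hsucc]
  have key : ∀ b : Bool,
      (sig (restrict ρ k) ++ blk b).getD (sig (restrict ρ k)).length true = true := by
    intro b
    rw [List.getD_eq_getElem?_getD, List.getElem?_append_right (le_refl _), Nat.sub_self]
    cases b <;> simp [blk]
  exact key (ρ k)

lemma sop1'_to_sop1 {mx my : ℕ} (φ : L.Formula (Fin mx ⊕ Fin my))
    (h : ExemplifiesSOP1' φ M) : ExemplifiesSOP1 φ M := by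
  obtain ⟨a, ha, hb⟩ := h
  refine ⟨fun η => a (sig η), ?_, ?_⟩
  · intro ρ
    obtain ⟨e, he⟩ := ha (sigBranch ρ)
    refine ⟨e, fun k => ?_⟩
    show φ.Realize (Sum.elim e (a (sig (restrict ρ k))))
    have := (he (sig (restrict ρ k)).length).mpr (sigBranch_at ρ k)
    rwa [restrict_sigBranch] at this
  · intro ν η hpre
    show ¬ ∃ e, φ.Realize (Sum.elim e (a (sig η))) ∧
        φ.Realize (Sum.elim e (a (sig (ν ++ [true]))))
    have hνt : sig (ν ++ [true]) = sig ν ++ [true] := by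
      rw [sig_append]; simp [sig, blk]
    rw [hνt]
    have key : (sig ν ++ [true]) ++ [false] <+: sig η := by
      have h2 : (sig ν ++ [true]) ++ [false] = sig (ν ++ [false]) := by
        rw [sig_append, List.append_assoc]
        simp [sig, blk]
      rw [h2]
      exact sig_mono hpre
    exact hb (sig ν ++ [true]) (sig η) key

lemma sop1_to_sop1' {mx my : ℕ} (φ : L.Formula (Fin mx ⊕ Fin my))
    (h : ExemplifiesSOP1 φ M) : ExemplifiesSOP1' φ M := by
  obtain ⟨a, ha, hb⟩ := h
  refine ⟨fun η => a (η ++ [true]), ?_, ?_⟩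
  · intro ρ
    obtain ⟨e, he⟩ := ha ρ
    refine ⟨e, fun k => ?_⟩
    show φ.Realize (Sum.elim e (a (restrict ρ k ++ [true]))) ↔ ρ k = true
    cases hk : ρ k with
    | true =>
      have h2 : restrict ρ k ++ [true] = restrict ρ (k+1) := by
        rw [restrict_succ, hk]
      rw [h2]
      exact iff_of_true (he (k+1)) rfl
    | false =>
      apply iff_of_false _ (by simp)
      intro hcon
      have hpre : restrict ρ k ++ [false] <+: restrict ρ (k+1) := by
        rw [restrict_succ, hk]
      exact hb (restrict ρ k) (restrict ρ (k+1)) hpre ⟨e, he (k+1), hcon⟩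
  · intro ν η hpre
    show ¬ ∃ e, φ.Realize (Sum.elim e (a (η ++ [true]))) ∧
        φ.Realize (Sum.elim e (a (ν ++ [true])))
    exact hb ν (η ++ [true]) (hpre.trans (List.prefix_append _ _))


/- ============ the depth-n tree sentence ============ -/

abbrev Node (n : ℕ) : Type := {l : List Bool // l.length ≤ n}

instance Node.finite (n : ℕ) : Finite (Node n) := by
  apply Finite.of_injective (fun l : Node n => (fun i : Fin (n+1) => l.val[i.val]?))
  intro a b h
  apply Subtype.ext
  apply List.ext_getElem?
  intro i
  rcases lt_or_ge i (n+1) with hi | hi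
  · exact congrFun h ⟨i, hi⟩
  · rw [List.getElem?_eq_none (le_trans a.2 (by omega)),
      List.getElem?_eq_none (le_trans b.2 (by omega))]

noncomputable instance Node.fintype (n : ℕ) : Fintype (Node n) := Fintype.ofFinite _

def nd {n : ℕ} (l : List Bool) : Node n :=
  ⟨l.take n, by rw [List.length_take]; exact min_le_left _ _⟩

lemma nd_eq {n : ℕ} {l : List Bool} (h : l.length ≤ n) : (nd l : Node n) = ⟨l, h⟩ :=
  Subtype.ext (List.take_of_length_le h)

noncomputable section

/-- conjunction over a finset (the older `BoundedFormula.iInf` interface). -/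
def finsetIInf {α β : Type*} {n : ℕ} (s : Finset β) (f : β → L.BoundedFormula α n) :
    L.BoundedFormula α n :=
  BoundedFormula.iInf (fun b : s => f b)

lemma realize_finsetIInf {α β : Type*} {n : ℕ} {s : Finset β} {f : β → L.BoundedFormula α n}
    {v : α → M} {v' : Fin n → M} :
    (finsetIInf s f).Realize v v' ↔ ∀ b ∈ s, (f b).Realize v v' := by
  simp [finsetIInf, BoundedFormula.realize_iInf]

/-- existential closure along a map (the older `Formula.iExs` interface). -/
def relIExs {α β γ : Type*} [Finite γ] (f : α → β ⊕ γ) (φ : L.Formula α) : L.Formula β :=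
  Formula.iExs γ (φ.relabel f)

lemma realize_relIExs {α β γ : Type*} [Finite γ] {f : α → β ⊕ γ} {φ : L.Formula α}
    {v : β → M} :
    (relIExs f φ).Realize v ↔ ∃ i : γ → M, φ.Realize (fun a => Sum.elim v i (f a)) := by
  rw [relIExs, Formula.realize_iExs]
  simp only [Formula.realize_relabel]
  rfl

open Classical in
/-- the positive branch condition at a leaf. -/
def branchFml {mx my : ℕ} (φ : L.Formula (Fin mx ⊕ Fin my)) (n : ℕ) (a : Node n) :
    L.Formula (Node n × Fin my) :=
  relIExs Sum.swap
    (finsetIInf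
      ((Finset.range n).filter (fun ℓ => a.val.getD ℓ false = true))
      (fun ℓ => Formula.relabel
        (Sum.map id (fun j => ((nd (a.val.take ℓ) : Node n), j))) φ))

def incompFml {mx my : ℕ} (φ : L.Formula (Fin mx ⊕ Fin my)) (n : ℕ) (a b : Node n) :
    L.Formula (Node n × Fin my) :=
  Formula.relabel (Sum.elim (fun j => (b, j)) (fun j => (a, j))) (incompatFormula φ)

open Classical in
def treeSentence {mx my : ℕ} (φ : L.Formula (Fin mx ⊕ Fin my)) (n : ℕ) : L.Sentence :=
  relIExs (Sum.inr : Node n × Fin my → Empty ⊕ (Node n × Fin my))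
    ((finsetIInf
        (Finset.univ.filter (fun a : Node n => a.val.length = n))
        (fun a => branchFml φ n a)) ⊓
      (finsetIInf
        (Finset.univ.filter (fun p : Node n × Node n => p.1.val ++ [false] <+: p.2.val))
        (fun p => incompFml φ n p.1 p.2)))

lemma realize_branchFml {mx my n : ℕ} {φ : L.Formula (Fin mx ⊕ Fin my)}
    {v : Node n × Fin my → M} (a : Node n) :
    (branchFml φ n a).Realize v ↔ ∃ e : Fin mx → M,
      ∀ ℓ : ℕ, ℓ < n → a.val.getD ℓ false = true →
        φ.Realize (Sum.elim e (fun j => v (nd (a.val.take ℓ), j))) := by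
  classical
  unfold branchFml
  rw [realize_relIExs]
  apply exists_congr; intro e
  have h0 : ∀ (ψ : L.Formula (Fin mx ⊕ (Node n × Fin my))) (w : _ → M),
      ψ.Realize w ↔ BoundedFormula.Realize ψ w default := fun _ _ => Iff.rfl
  rw [h0, realize_finsetIInf]
  have harg : ∀ ℓ : ℕ, ((fun x : Fin mx ⊕ (Node n × Fin my) => Sum.elim v e x.swap) ∘
      (Sum.map id fun j => ((nd (a.val.take ℓ) : Node n), j)))
      = Sum.elim e (fun j => v (nd (a.val.take ℓ), j)) := by
    intro ℓ; funext x; rcases x with i | j <;> rfl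
  constructor
  · intro h ℓ h1 h2
    have := h ℓ (Finset.mem_filter.mpr ⟨Finset.mem_range.mpr h1, h2⟩)
    rw [← h0, Formula.realize_relabel, harg ℓ] at this
    exact this
  · intro h ℓ hℓ
    rw [Finset.mem_filter, Finset.mem_range] at hℓ
    rw [← h0, Formula.realize_relabel, harg ℓ]
    exact h ℓ hℓ.1 hℓ.2

lemma realize_incompFml {mx my n : ℕ} {φ : L.Formula (Fin mx ⊕ Fin my)}
    {v : Node n × Fin my → M} (a b : Node n) :
    (incompFml φ n a b).Realize v ↔
      ¬ ∃ e : Fin mx → M, φ.Realize (Sum.elim e (fun j => v (b, j))) ∧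
        φ.Realize (Sum.elim e (fun j => v (a, j))) := by
  unfold incompFml
  rw [Formula.realize_relabel]
  have : (v ∘ Sum.elim (fun j => (b, j)) (fun j => (a, j))) =
      Sum.elim (fun j => v (b, j)) (fun j => v (a, j)) := by
    funext x; rcases x with i | j <;> rfl
  rw [this, realize_incompatFormula]

lemma realizes_empty {m : ℕ} (e : Fin m → M) : Realizes (∅ : Set (ParamFormula L M m)) e :=
  fun ψ hψ => absurd hψ (Set.notMem_empty ψ)

lemma realize_treeSentence_iff {mx my : ℕ} (φ : L.Formula (Fin mx ⊕ Fin my)) (n : ℕ) :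
    M ⊨ treeSentence φ n ↔
      ∃ c : List Bool → Fin my → M,
        TreeOn φ (∅ : Set (ParamFormula L M mx)) (∅ : Set (ParamFormula L M my)) n c := by
  classical
  unfold treeSentence
  rw [Sentence.Realize, realize_relIExs]
  have h0 : ∀ (ψ : L.Formula (Node n × Fin my)) (w : _ → M),
      ψ.Realize w ↔ BoundedFormula.Realize ψ w default := fun _ _ => Iff.rfl
  constructor
  · rintro ⟨v, hv⟩
    rw [h0, BoundedFormula.realize_inf, realize_finsetIInf,
      realize_finsetIInf] at hv
    obtain ⟨hbr, hinc⟩ := hv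
    set w : Node n × Fin my → M := fun x => Sum.elim (default : Empty → M) v (Sum.inr x) with hw
    refine ⟨fun l j => w (nd l, j), ?_, ?_, ?_⟩
    · intro η hη
      have hmem : (⟨η, le_of_eq hη⟩ : Node n) ∈
          Finset.univ.filter (fun a : Node n => a.val.length = n) :=
        Finset.mem_filter.mpr ⟨Finset.mem_univ _, hη⟩
      have := hbr _ hmem
      rw [← h0, realize_branchFml] at this
      obtain ⟨e, he⟩ := this
      exact ⟨e, realizes_empty e, fun ℓ h1 h2 => he ℓ h1 h2⟩
    · intro η _
      exact realizes_empty _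
    · intro ν η hη hpre
      have hν : ν.length ≤ n := by
        have := hpre.length_le
        simp only [List.length_append, List.length_cons, List.length_nil] at this
        omega
      have hmem : ((⟨ν, hν⟩, ⟨η, hη⟩) : Node n × Node n) ∈
          Finset.univ.filter (fun p : Node n × Node n => p.1.val ++ [false] <+: p.2.val) :=
        Finset.mem_filter.mpr ⟨Finset.mem_univ _, hpre⟩
      have := hinc _ hmem
      rw [← h0, realize_incompFml] at this
      show ¬ ∃ e, φ.Realize (Sum.elim e (fun j => w ((nd η : Node n), j))) ∧
          φ.Realize (Sum.elim e (fun j => w ((nd ν : Node n), j)))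
      rw [nd_eq hη, nd_eq hν]
      exact this
  · rintro ⟨c, h1, _, h3⟩
    refine ⟨fun x => c x.1.val x.2, ?_⟩
    rw [h0, BoundedFormula.realize_inf, realize_finsetIInf,
      realize_finsetIInf]
    constructor
    · intro a ha
      rw [Finset.mem_filter] at ha
      rw [← h0, realize_branchFml]
      obtain ⟨e, -, he⟩ := h1 a.val ha.2
      refine ⟨e, fun ℓ hℓ hget => ?_⟩
      have := he ℓ hℓ hget
      have harg : (fun j => Sum.elim (default : Empty → M)
          (fun x : Node n × Fin my => c x.1.val x.2) (Sum.inr ((nd (a.val.take ℓ) : Node n), j)))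
          = c (a.val.take ℓ) := by
        funext j
        show c ((a.val.take ℓ).take n) j = c (a.val.take ℓ) j
        rw [List.take_take, Nat.min_eq_right (le_of_lt hℓ)]
      rw [show (fun j => (fun x : Node n × Fin my => Sum.elim (default : Empty → M)
          (fun y : Node n × Fin my => c y.1.val y.2) (Sum.inr x)) ((nd (a.val.take ℓ) : Node n), j))
          = c (a.val.take ℓ) from harg]
      exact this
    · intro p hp
      rw [Finset.mem_filter] at hp
      rw [← h0, realize_incompFml]
      exact h3 p.1.val p.2.val p.2.2 hp.2

end


/- ============ SOP1' -> TreeOn ============ -/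

lemma treeOn_of_sop1' {mx my : ℕ} (φ : L.Formula (Fin mx ⊕ Fin my))
    (h : ExemplifiesSOP1' φ M) (n : ℕ) :
    ∃ c, TreeOn φ (∅ : Set (ParamFormula L M mx)) (∅ : Set (ParamFormula L M my)) n c := by
  obtain ⟨a, ha, hb⟩ := h
  refine ⟨a, ?_, fun η _ => realizes_empty _, fun ν η _ hpre => hb ν η hpre⟩
  intro η hη
  obtain ⟨e, he⟩ := ha (fun k => η.getD k false)
  refine ⟨e, realizes_empty e, fun ℓ hℓ hget => ?_⟩
  have h2 := (he ℓ).mpr hget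
  rwa [restrict_getD η (by omega)] at h2

/- ============ compactness: infinite rank gives an SOP1' model ============ -/

section Compactness

variable (𝔠 : Type) [L.Structure 𝔠] [Nonempty 𝔠] {mx my : ℕ}

/-- signed version of a formula. -/
def signedFml (φ : L.Formula (Fin mx ⊕ Fin my)) (b : Bool) : L.Formula (Fin mx ⊕ Fin my) :=
  if b then φ else φ.not

/-- index type for new constants: tree nodes and branch witnesses. -/
@[reducible] def CIdx (mx my : ℕ) : Type := (List Bool × Fin my) ⊕ ((ℕ → Bool) × Fin mx)

def brSent (φ : L.Formula (Fin mx ⊕ Fin my)) (ρ : ℕ → Bool) (k : ℕ) :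
    (L[[CIdx mx my]]).Sentence :=
  Formula.equivSentence ((signedFml φ (ρ k)).relabel
    (Sum.elim (fun i => Sum.inr (ρ, i)) (fun j => Sum.inl (restrict ρ k, j))))

def incSent (φ : L.Formula (Fin mx ⊕ Fin my)) (ν η : List Bool) :
    (L[[CIdx mx my]]).Sentence :=
  Formula.equivSentence ((incompatFormula φ).relabel
    (Sum.elim (fun j => Sum.inl (η, j)) (fun j => Sum.inl (ν, j))))

def bigTheory (φ : L.Formula (Fin mx ⊕ Fin my)) (n : ℕ) : (L[[CIdx mx my]]).Theory :=
  (L.lhomWithConstants (CIdx mx my)).onTheory (L.completeTheory 𝔠) ∪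
  ({S | ∃ ρ k, k < n ∧ S = brSent φ ρ k} ∪
   {S | ∃ ν η, (ν ++ [false]) <+: η ∧ η.length ≤ n ∧ S = incSent φ ν η})

lemma bigTheory_mono (φ : L.Formula (Fin mx ⊕ Fin my)) : Monotone (bigTheory 𝔠 φ) := by
  intro m n hmn
  apply Set.union_subset_union_right
  apply Set.union_subset_union
  · rintro S ⟨ρ, k, hk, rfl⟩
    exact ⟨ρ, k, by omega, rfl⟩
  · rintro S ⟨ν, η, hpre, hlen, rfl⟩
    exact ⟨ν, η, hpre, by omega, rfl⟩

lemma take_restrict_append (ρ : ℕ → Bool) {k n : ℕ} (hk : k ≤ n) :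
    (restrict ρ n ++ [true]).take k = restrict ρ k := by
  have h2 : restrict ρ k <+: restrict ρ n ++ [true] :=
    (restrict_prefix ρ hk).trans (List.prefix_append _ _)
  rw [List.prefix_iff_eq_take, restrict_length] at h2
  exact h2.symm

lemma getD_restrict_append (ρ : ℕ → Bool) {k n : ℕ} (hk : k < n) :
    (restrict ρ n ++ [true]).getD k false = ρ k := by
  have hk2 : k < (restrict ρ n ++ [true]).length := by
    rw [List.length_append, restrict_length]; omega
  rw [List.getD_eq_getElem _ _ hk2,
    List.getElem_append_left (by rw [restrict_length]; omega), restrict_getElem]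

lemma getD_restrict_append_last (ρ : ℕ → Bool) (n : ℕ) :
    (restrict ρ n ++ [true]).getD n false = true := by
  rw [List.getD_eq_getElem?_getD,
    List.getElem?_append_right (by rw [restrict_length]),
    (by rw [restrict_length]; omega : n - (restrict ρ n).length = 0)]
  rfl

lemma bigTheory_isSat (φ : L.Formula (Fin mx ⊕ Fin my))
    (hinf : ∀ n : ℕ, RankGE (M := 𝔠) φ n ∅ ∅) (n : ℕ) :
    (bigTheory 𝔠 φ n).IsSatisfiable := by
  classical
  obtain ⟨c, hc1, hc2, hc3⟩ := treeOn_of_rankGE φ (n+1)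
    (∅ : Set (ParamFormula L 𝔠 mx)) ∅ (hinf (n+1))
  choose E hE0 hE using fun ρ : ℕ → Bool => hc1 (restrict ρ n ++ [true])
    (by rw [List.length_append, restrict_length]; rfl)
  letI : (constantsOn (CIdx mx my)).Structure 𝔠 :=
    constantsOn.structure (Sum.elim (fun x => c x.1 x.2) (fun x => E x.1 x.2))
  have hpos : ∀ ρ : ℕ → Bool, φ.Realize (Sum.elim (E ρ) (c (restrict ρ n))) := by
    intro ρ
    have := hE ρ n (by omega) (getD_restrict_append_last ρ n)
    rwa [take_restrict_append ρ (le_refl n)] at this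
  have hmodel : 𝔠 ⊨ bigTheory 𝔠 φ n := by
    rw [bigTheory, Theory.model_union_iff, Theory.model_union_iff]
    refine ⟨(LHom.onTheory_model _ _).2 inferInstance, ?_, ?_⟩
    · rw [Theory.model_iff]
      rintro S ⟨ρ, k, hk, rfl⟩
      rw [brSent, Formula.realize_equivSentence, Formula.realize_relabel]
      have hv : ((fun a => ((L.con a) : 𝔠)) ∘
          (Sum.elim (fun i => Sum.inr (ρ, i)) (fun j => Sum.inl (restrict ρ k, j)) :
            Fin mx ⊕ Fin my → CIdx mx my))
          = Sum.elim (E ρ) (c (restrict ρ k)) := by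
        funext x; rcases x with i | j <;> rfl
      rw [hv]
      cases hb : ρ k with
      | true =>
        have := hE ρ k (by omega) (by rw [getD_restrict_append ρ hk, hb])
        rw [take_restrict_append ρ (le_of_lt hk)] at this
        simpa [signedFml] using this
      | false =>
        have hnφ : ¬ φ.Realize (Sum.elim (E ρ) (c (restrict ρ k))) := by
          intro hcon
          refine hc3 (restrict ρ k) (restrict ρ n) (by rw [restrict_length]; omega) ?_
            ⟨E ρ, hpos ρ, hcon⟩
          rw [← hb, ← restrict_succ]
          exact restrict_prefix ρ (by omega)
        simpa [signedFml, Formula.realize_not] using hnφ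
    · rw [Theory.model_iff]
      rintro S ⟨ν, η, hpre, hlen, rfl⟩
      rw [incSent, Formula.realize_equivSentence, Formula.realize_relabel]
      have hv : ((fun a => ((L.con a) : 𝔠)) ∘
          (Sum.elim (fun j => Sum.inl (η, j)) (fun j => Sum.inl (ν, j)) :
            Fin my ⊕ Fin my → CIdx mx my))
          = Sum.elim (c η) (c ν) := by
        funext x; rcases x with i | j <;> rfl
      rw [hv, realize_incompatFormula]
      exact hc3 ν η (by omega) hpre
  exact Theory.Model.isSatisfiable 𝔠

lemma exists_sop1'_model (φ : L.Formula (Fin mx ⊕ Fin my))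
    (hinf : ∀ n : ℕ, RankGE (M := 𝔠) φ n ∅ ∅) :
    ∃ N : Theory.ModelType.{0,0,0} (L.completeTheory 𝔠), ExemplifiesSOP1' φ N := by
  have hsat : Theory.IsSatisfiable (⋃ n, bigTheory 𝔠 φ n) := by
    rw [Theory.isSatisfiable_directed_union_iff ((bigTheory_mono 𝔠 φ).directed_le)]
    exact fun n => bigTheory_isSat 𝔠 φ hinf n
  obtain ⟨M0⟩ := hsat
  letI : L.Structure M0 := (L.lhomWithConstants (CIdx mx my)).reduct M0
  haveI hexp : (L.lhomWithConstants (CIdx mx my)).IsExpansionOn M0 :=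
    LHom.isExpansionOn_reduct _ _
  have hCT : (M0 : Type) ⊨ L.completeTheory 𝔠 := by
    have h1 : (M0 : Type) ⊨ (L.lhomWithConstants (CIdx mx my)).onTheory (L.completeTheory 𝔠) :=
      M0.is_model.mono ((Set.subset_union_left).trans (Set.subset_iUnion (bigTheory 𝔠 φ) 0))
    exact (LHom.onTheory_model _ _).1 h1
  have hall : ∀ S ∈ (⋃ n, bigTheory 𝔠 φ n), (M0 : Type) ⊨ S :=
    fun S hS => Theory.realize_sentence_of_mem (T := ⋃ n, bigTheory 𝔠 φ n) hS
  haveI : (M0 : Type) ⊨ L.completeTheory 𝔠 := hCT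
  refine ⟨(⟨(M0 : Type)⟩ : Theory.ModelType.{0,0,0} (L.completeTheory 𝔠)), ?_⟩
  refine ⟨fun η j => ((L.con (Sum.inl (η, j) : CIdx mx my)) : M0), ?_, ?_⟩
  · intro ρ
    refine ⟨fun i => ((L.con (Sum.inr (ρ, i) : CIdx mx my)) : M0), fun k => ?_⟩
    have hS : brSent φ ρ k ∈ ⋃ n, bigTheory 𝔠 φ n := by
      apply Set.mem_iUnion.mpr ⟨k+1, _⟩
      exact Or.inr (Or.inl ⟨ρ, k, by omega, rfl⟩)
    have := hall _ hS
    rw [brSent, Formula.realize_equivSentence, Formula.realize_relabel] at this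
    have hv : ((fun a => ((L.con a) : M0)) ∘
        (Sum.elim (fun i => Sum.inr (ρ, i)) (fun j => Sum.inl (restrict ρ k, j)) :
          Fin mx ⊕ Fin my → CIdx mx my))
        = Sum.elim (fun i => ((L.con (Sum.inr (ρ, i) : CIdx mx my)) : M0))
            (fun j => ((L.con (Sum.inl (restrict ρ k, j) : CIdx mx my)) : M0)) := by
      funext x; rcases x with i | j <;> rfl
    rw [hv] at this
    cases hb : ρ k with
    | true =>
      rw [hb] at this
      simp only [signedFml, if_true] at this
      exact iff_of_true this rfl
    | false =>
      rw [hb] at this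
      simp only [signedFml, if_false, Formula.realize_not] at this
      exact iff_of_false this (by simp)
  · intro ν η hpre
    have hS : incSent φ ν η ∈ ⋃ n, bigTheory 𝔠 φ n := by
      apply Set.mem_iUnion.mpr ⟨η.length, _⟩
      exact Or.inr (Or.inr ⟨ν, η, hpre, le_refl _, rfl⟩)
    have := hall _ hS
    rw [incSent, Formula.realize_equivSentence, Formula.realize_relabel] at this
    have hv : ((fun a => ((L.con a) : M0)) ∘
        (Sum.elim (fun j => Sum.inl (η, j)) (fun j => Sum.inl (ν, j)) :
          Fin my ⊕ Fin my → CIdx mx my))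
        = Sum.elim (fun j => ((L.con (Sum.inl (η, j) : CIdx mx my)) : M0))
            (fun j => ((L.con (Sum.inl (ν, j) : CIdx mx my)) : M0)) := by
      funext x; rcases x with i | j <;> rfl
    rw [hv, realize_incompatFormula] at this
    exact this

end Compactness

/-- For a complete first-order theory `T` (here the complete theory of a
monster model `𝔠`) the following are equivalent:
(i) `T` does not have SOP₁ (no formula exemplifies SOP₁ in any model of `T`);
(ii) `T` does not have SOP₁';
(iii) `rk¹_φ({x̄=x̄},{ȳ=ȳ})` is finite for every formula `φ(x̄,ȳ)` (the trivial types are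
represented by `∅`). -/
theorem NSOP1_iff_NSOP1'_iff_rank_finite (𝔠 : Type) [L.Structure 𝔠] [Nonempty 𝔠] :
    ((¬ ∃ (N : Theory.ModelType.{0, 0, 0} (L.completeTheory 𝔠)) (mx my : ℕ)
        (φ : L.Formula (Fin mx ⊕ Fin my)), ExemplifiesSOP1 φ N) ↔
      (¬ ∃ (N : Theory.ModelType.{0, 0, 0} (L.completeTheory 𝔠)) (mx my : ℕ)
        (φ : L.Formula (Fin mx ⊕ Fin my)), ExemplifiesSOP1' φ N)) ∧
    ((¬ ∃ (N : Theory.ModelType.{0, 0, 0} (L.completeTheory 𝔠)) (mx my : ℕ)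
        (φ : L.Formula (Fin mx ⊕ Fin my)), ExemplifiesSOP1' φ N) ↔
      (∀ (mx my : ℕ) (φ : L.Formula (Fin mx ⊕ Fin my)),
        ∃ n : ℕ, ¬ RankGE (M := 𝔠) φ n ∅ ∅)) := by
  constructor
  · -- SOP1 iff SOP1'
    constructor
    · intro h
      rintro ⟨N, mx, my, φ, hS⟩
      exact h ⟨N, mx, my, φ, sop1'_to_sop1 φ hS⟩
    · intro h
      rintro ⟨N, mx, my, φ, hS⟩
      exact h ⟨N, mx, my, φ, sop1_to_sop1' φ hS⟩
  · constructor
    · intro hB mx my φ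
      by_contra hc
      push_neg at hc
      obtain ⟨N, hS⟩ := exists_sop1'_model 𝔠 φ hc
      exact hB ⟨N, mx, my, φ, hS⟩
    · intro hR
      rintro ⟨N, mx, my, φ, hS⟩
      obtain ⟨n, hn⟩ := hR mx my φ
      apply hn
      have h1 : (N : Type) ⊨ treeSentence φ n :=
        (realize_treeSentence_iff φ n).mpr (treeOn_of_sop1' φ hS n)
      have h2 : 𝔠 ⊨ treeSentence φ n :=
        (realize_iff_of_model_completeTheory 𝔠 N _).mp h1
      obtain ⟨c, hc⟩ := (realize_treeSentence_iff φ n).mp h2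
      exact rankGE_of_treeOn φ n _ _ c hc

end SopPaper
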